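/- Let n and k be integers with 1 < n < k < 2n, let D ⊆ {1,…,n} be a set of positive integers with n ∈ D, and let S = {1,…,k}. Let G be a finite bipartite simple graph with parts V_L and V_R, let G' be a finite simple graph with V_L ∪ V_R ⊆ V(G'), and let Blue_0, Red_0 be disjoint subsets of V(G') \ (V_L ∪ V_R) such that: (a) every vertex of V(G') \ (V_L ∪ V_R ∪ Blue_0 ∪ Red_0) is at graph distance at most k in G' from some vertex of Blue_0 and at distance at most k from some vertex of Red_0; (b) every x ∈ V_L is at distance at most k from some vertex of Red_0, at distance at least k+1 from every vertex of Blue_0, and at distance at least n+1 from every vertex of Red_0; (b') every y ∈ V_R is at distance at most k from some vertex of Blue_0, at distance at least k+1 from every vertex of Red_0, and at distance at least n+1 from every vertex of Blue_0; (c) for distinct u, v ∈ V_L ∪ V_R, dist_{G'}(u,v) = n if uv is an edge of G, and dist_{G'}(u,v) ≥ k+1 otherwise (in particular whenever u and v lie in the same part); (d) any two distinct vertices of Blue_0 ∪ Red_0 are at distance at least k+1. Then the distance game D⟨D,S⟩ on G' starting from the position with blue pieces on Blue_0 and red pieces on Red_0 is play-for-play equivalent to BiGraph-Node-Kayles on G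 starting from the empty position; in particular, for each player, that player has a winning strategy moving first (respectively, second) in one game if and only if in the other. -/

import Mathlib

universe u

/-- Combinatorial game theory (`SetTheory.PGame`) was removed from Mathlib; its core
definitions are restated here with their December 2024 meaning. -/
inductive SetTheory.PGame : Type (u + 1)
  | mk : ∀ α β : Type u, (α → SetTheory.PGame) → (β → SetTheory.PGame) → SetTheory.PGame

namespace SetTheory.PGame

def LeftMoves : PGame → Type u
  | mk l _ _ _ => l

def RightMoves : PGame → Type u
  | mk _ r _ _ => r

def moveLeft : (g : PGame) → LeftMoves g → PGame
  | mk _l _ L _ => L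

def moveRight : (g : PGame) → RightMoves g → PGame
  | mk _ _r _ R => R

/-- `leAux x y = (x ≤ y, y ≤ x)`, by recursion on `x` and then on `y`, following the old
defining equation `x ≤ y ↔ (∀ i, ¬ y ≤ x.moveLeft i) ∧ ∀ j, ¬ y.moveRight j ≤ x`. -/
noncomputable def leAux (x : PGame.{u}) : PGame.{u} → Prop × Prop :=
  PGame.rec (motive := fun _ => PGame.{u} → Prop × Prop)
    (fun _xl _xr xL xR ihL ihR y =>
      PGame.rec (motive := fun _ => Prop × Prop)
        (fun yl yr yL yR jhL jhR =>
          ((∀ i, ¬ (ihL i (mk yl yr yL yR)).2) ∧ ∀ j, ¬ (jhR j).2,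
            (∀ i, ¬ (jhL i).1) ∧ ∀ j, ¬ (ihR j (mk yl yr yL yR)).1)) y) x

instance : LE PGame.{u} :=
  ⟨fun x y => (leAux x y).1⟩

def LF (x y : PGame.{u}) : Prop :=
  ¬y ≤ x

infixl:50 " ⧏ " => PGame.LF

instance : Zero PGame.{u} :=
  ⟨⟨PEmpty, PEmpty, PEmpty.elim, PEmpty.elim⟩⟩

inductive Relabelling : PGame.{u} → PGame.{u} → Type (u + 1)
  | mk : ∀ {x y : PGame} (L : x.LeftMoves ≃ y.LeftMoves) (R : x.RightMoves ≃ y.RightMoves),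
    (∀ i, Relabelling (x.moveLeft i) (y.moveLeft (L i))) →
      (∀ j, Relabelling (x.moveRight j) (y.moveRight (R j))) → Relabelling x y

infixl:50 " ≡r " => PGame.Relabelling

end SetTheory.PGame

open SimpleGraph SetTheory

/-- In the distance game `D⟨D,S⟩` on the graph `G`, from the position with blue pieces on
`blue` and red pieces on `red`, Left may legally place a blue piece on the vertex `v`. -/
def LeftMove {W : Type*} (G : SimpleGraph W) (D S : Set ℕ) (blue red : Finset W) (v : W) : Prop :=
  v ∉ blue ∧ v ∉ red ∧ (∀ r ∈ red, ∀ d ∈ D, G.edist v r ≠ (d : ℕ∞)) ∧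
    ∀ b ∈ blue, ∀ s ∈ S, G.edist v b ≠ (s : ℕ∞)

/-- Right may legally place a red piece on the vertex `v`. -/
def RightMove {W : Type*} (G : SimpleGraph W) (D S : Set ℕ) (blue red : Finset W) (v : W) : Prop :=
  v ∉ blue ∧ v ∉ red ∧ (∀ b ∈ blue, ∀ d ∈ D, G.edist v b ≠ (d : ℕ∞)) ∧
    ∀ r ∈ red, ∀ s ∈ S, G.edist v r ≠ (s : ℕ∞)

/-- The distance game `D⟨D,S⟩` on `G` from the position `(blue, red)`, as a combinatorial
game (normal play: a player with no legal move loses). -/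
def distGame {W : Type*} [Fintype W] [DecidableEq W] (G : SimpleGraph W) (D S : Set ℕ)
    (blue red : Finset W) : PGame :=
  PGame.mk {v // LeftMove G D S blue red v} {v // RightMove G D S blue red v}
    (fun x => distGame G D S (insert x.1 blue) red)
    (fun x => distGame G D S blue (insert x.1 red))
termination_by ((blue ∪ red)ᶜ).card
decreasing_by
  · obtain ⟨h1, h2, -, -⟩ := x.2
    calc ((insert x.1 blue ∪ red)ᶜ).card
        = (((blue ∪ red)ᶜ).erase x.1).card := by
          rw [Finset.insert_union, Finset.compl_insert]
      _ < ((blue ∪ red)ᶜ).card :=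
          Finset.card_erase_lt_of_mem (Finset.mem_compl.2 (by simp [h1, h2]))
  · obtain ⟨h1, h2, -, -⟩ := x.2
    calc ((blue ∪ insert x.1 red)ᶜ).card
        = (((blue ∪ red)ᶜ).erase x.1).card := by
          rw [Finset.union_insert, Finset.compl_insert]
      _ < ((blue ∪ red)ᶜ).card :=
          Finset.card_erase_lt_of_mem (Finset.mem_compl.2 (by simp [h1, h2]))

/-- `BiGraph-Node-Kayles` on a bipartite graph `G` with parts `VL`, `VR`, from the position
where `occ` is the set of occupied vertices: players alternately occupy vertices that are
neither equal nor adjacent to a previously occupied vertex, Left occupying only vertices of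
`VL` and Right only vertices of `VR`; a player with no legal move loses. -/
def bnkGame {V : Type*} [Fintype V] [DecidableEq V] (G : SimpleGraph V) (VL VR : Finset V)
    (occ : Finset V) : PGame :=
  PGame.mk {v // v ∈ VL ∧ v ∉ occ ∧ ∀ u ∈ occ, ¬G.Adj v u}
    {v // v ∈ VR ∧ v ∉ occ ∧ ∀ u ∈ occ, ¬G.Adj v u}
    (fun x => bnkGame G VL VR (insert x.1 occ))
    (fun x => bnkGame G VL VR (insert x.1 occ))
termination_by occᶜ.card
decreasing_by
  all_goals
  · obtain ⟨-, h1, -⟩ := x.2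
    calc ((insert x.1 occ)ᶜ).card = (occᶜ.erase x.1).card := by rw [Finset.compl_insert]
      _ < occᶜ.card := Finset.card_erase_lt_of_mem (Finset.mem_compl.2 h1)


private theorem exdist {W : Type*} (G : SimpleGraph W) (w b : W) (k : ℕ) (hne : w ≠ b)
    (hle : G.edist w b ≤ (k:ℕ∞)) : ∃ m : ℕ, 1 ≤ m ∧ m ≤ k ∧ G.edist w b = (m : ℕ∞) := by
  have htop : G.edist w b ≠ ⊤ := (lt_of_le_of_lt hle (by simp [lt_top_iff_ne_top])).ne
  lift G.edist w b to ℕ using htop with m hm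
  have h0 : G.edist w b ≠ 0 := fun h => hne (SimpleGraph.edist_eq_zero_iff.1 h)
  have hm0 : (m:ℕ∞) ≠ 0 := hm ▸ h0
  have : m ≠ 0 := by exact_mod_cast hm0
  exact ⟨m, by omega, by exact_mod_cast hle, rfl⟩

namespace SetTheory.PGame

def Relabelling.mk' {x y : PGame.{u}} (L : y.LeftMoves ≃ x.LeftMoves)
    (R : y.RightMoves ≃ x.RightMoves)
    (hL : ∀ i, x.moveLeft (L i) ≡r y.moveLeft i) (hR : ∀ j, x.moveRight (R j) ≡r y.moveRight j) :
    x ≡r y :=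
  Relabelling.mk L.symm R.symm
    (fun i => by have h := hL (L.symm i); rw [Equiv.apply_symm_apply] at h; exact h)
    (fun j => by have h := hR (R.symm j); rw [Equiv.apply_symm_apply] at h; exact h)

theorem zero_le_iff' (x : PGame.{u}) :
    (0 ≤ x ↔ ∀ j, ¬ (leAux 0 (x.moveRight j)).2) ∧
    ((leAux 0 x).2 ↔ ∀ i, ¬ 0 ≤ x.moveLeft i) ∧
    (x ≤ 0 ↔ ∀ i, ¬ (leAux (x.moveLeft i) 0).2) ∧
    ((leAux x 0).2 ↔ ∀ j, ¬ x.moveRight j ≤ 0) := by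
  cases x
  exact ⟨⟨fun h => h.2, fun h => ⟨fun i => i.elim, h⟩⟩, ⟨fun h => h.1, fun h => ⟨h, fun j => j.elim⟩⟩,
    ⟨fun h => h.1, fun h => ⟨h, fun j => j.elim⟩⟩, ⟨fun h => h.2, fun h => ⟨fun i => i.elim, h⟩⟩⟩

theorem relab_zero_iff {x y : PGame.{u}} (r : x ≡r y) :
    (0 ≤ x ↔ 0 ≤ y) ∧ ((leAux 0 x).2 ↔ (leAux 0 y).2) ∧
    (x ≤ 0 ↔ y ≤ 0) ∧ ((leAux x 0).2 ↔ (leAux y 0).2) := by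
  induction r with
  | @mk x y L R _ _ ihL ihR =>
    refine ⟨?_, ?_, ?_, ?_⟩
    · rw [(zero_le_iff' x).1, (zero_le_iff' y).1]
      exact ⟨fun h j => by have := h (R.symm j); rw [(ihR (R.symm j)).2.1] at this;
                            rwa [Equiv.apply_symm_apply] at this,
        fun h j => by rw [(ihR j).2.1]; exact h (R j)⟩
    · rw [(zero_le_iff' x).2.1, (zero_le_iff' y).2.1]
      exact ⟨fun h i => by have := h (L.symm i); rw [(ihL (L.symm i)).1] at this;
                            rwa [Equiv.apply_symm_apply] at this,
        fun h i => by rw [(ihL i).1]; exact h (L i)⟩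
    · rw [(zero_le_iff' x).2.2.1, (zero_le_iff' y).2.2.1]
      exact ⟨fun h i => by have := h (L.symm i); rw [(ihL (L.symm i)).2.2.2] at this;
                            rwa [Equiv.apply_symm_apply] at this,
        fun h i => by rw [(ihL i).2.2.2]; exact h (L i)⟩
    · rw [(zero_le_iff' x).2.2.2, (zero_le_iff' y).2.2.2]
      exact ⟨fun h j => by have := h (R.symm j); rw [(ihR (R.symm j)).2.2.1] at this;
                            rwa [Equiv.apply_symm_apply] at this,
        fun h j => by rw [(ihR j).2.2.1]; exact h (R j)⟩

end SetTheory.PGame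

open SetTheory.PGame in
/-- for `1 < n < k < 2n`, `D ⊆ {1,…,n}` with `n ∈ D`, and `S = {1,…,k}`, under
hypotheses (a), (b), (b'), (c), (d), the distance game `D⟨D,S⟩` on `G'` starting from the
position with blue pieces on `Blue0` and red pieces on `Red0` is play-for-play equivalent to
`BiGraph-Node-Kayles` on the bipartite graph `G` (with parts `VL`, `VR`) starting from the
empty position. -/
theorem stmt15 {V W : Type u} [Fintype V] [DecidableEq V] [Fintype W] [DecidableEq W]
    (n k : ℕ) (hn : 1 < n) (hnk : n < k) (hk2n : k < 2 * n)
    (D : Set ℕ) (hD : D ⊆ Set.Icc 1 n) (hnD : n ∈ D)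
    (G : SimpleGraph V) (VL VR : Finset V)
    (hcover : ∀ v : V, v ∈ VL ∨ v ∈ VR) (hparts : Disjoint VL VR)
    (hbip : ∀ ⦃x y : V⦄, G.Adj x y → (x ∈ VL ∧ y ∈ VR) ∨ (x ∈ VR ∧ y ∈ VL))
    (G' : SimpleGraph W) (ι : V ↪ W)
    (Blue0 Red0 : Finset W) (hBR : Disjoint Blue0 Red0)
    (hB0 : ∀ v : V, ι v ∉ Blue0) (hR0 : ∀ v : V, ι v ∉ Red0)
    -- (a) every extra vertex is within distance `k` of `Blue0` and of `Red0`: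
    (ha : ∀ w : W, (∀ v : V, ι v ≠ w) → w ∉ Blue0 → w ∉ Red0 →
      (∃ b ∈ Blue0, G'.edist w b ≤ (k : ℕ∞)) ∧ (∃ r ∈ Red0, G'.edist w r ≤ (k : ℕ∞)))
    -- (b) every `x ∈ VL` is within distance `k` of some vertex of `Red0`, at distance at
    -- least `k+1` from every vertex of `Blue0`, and at distance at least `n+1` from every
    -- vertex of `Red0`:
    (hbL : ∀ x ∈ VL, (∃ r ∈ Red0, G'.edist (ι x) r ≤ (k : ℕ∞)) ∧
      (∀ b ∈ Blue0, (k : ℕ∞) + 1 ≤ G'.edist (ι x) b) ∧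
      (∀ r ∈ Red0, (n : ℕ∞) + 1 ≤ G'.edist (ι x) r))
    -- (b') every `y ∈ VR` is within distance `k` of some vertex of `Blue0`, at distance at
    -- least `k+1` from every vertex of `Red0`, and at distance at least `n+1` from every
    -- vertex of `Blue0`:
    (hbR : ∀ y ∈ VR, (∃ b ∈ Blue0, G'.edist (ι y) b ≤ (k : ℕ∞)) ∧
      (∀ r ∈ Red0, (k : ℕ∞) + 1 ≤ G'.edist (ι y) r) ∧
      (∀ b ∈ Blue0, (n : ℕ∞) + 1 ≤ G'.edist (ι y) b))
    -- (c) distances between vertices of `V(G) = VL ∪ VR`: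
    (hc : ∀ u v : V, u ≠ v →
      (G.Adj u v → G'.edist (ι u) (ι v) = (n : ℕ∞)) ∧
      (¬G.Adj u v → (k : ℕ∞) + 1 ≤ G'.edist (ι u) (ι v)))
    -- (d) distinct vertices of `Blue0 ∪ Red0` are at distance at least `k+1`:
    (hd : ∀ w₁ ∈ Blue0 ∪ Red0, ∀ w₂ ∈ Blue0 ∪ Red0, w₁ ≠ w₂ →
      (k : ℕ∞) + 1 ≤ G'.edist w₁ w₂) :
    -- the two games are play-for-play equivalent:
    Nonempty (distGame G' D (Set.Icc 1 k) Blue0 Red0 ≡r bnkGame G VL VR ∅) ∧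
    -- in particular, for each player, that player has a winning strategy moving first
    -- (respectively, second) in one game iff in the other:
    ((0 ⧏ distGame G' D (Set.Icc 1 k) Blue0 Red0 ↔ 0 ⧏ bnkGame G VL VR ∅) ∧
      (0 ≤ distGame G' D (Set.Icc 1 k) Blue0 Red0 ↔ 0 ≤ bnkGame G VL VR ∅) ∧
      (distGame G' D (Set.Icc 1 k) Blue0 Red0 ⧏ 0 ↔ bnkGame G VL VR ∅ ⧏ 0) ∧
      (distGame G' D (Set.Icc 1 k) Blue0 Red0 ≤ 0 ↔ bnkGame G VL VR ∅ ≤ 0)) := by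
  
  classical
  -- Characterization of Left moves
  have hLchar : ∀ (occ : Finset V) (w : W),
      LeftMove G' D (Set.Icc 1 k) (Blue0 ∪ (occ ∩ VL).image ι) (Red0 ∪ (occ ∩ VR).image ι) w ↔
      ∃ x : V, ι x = w ∧ (x ∈ VL ∧ x ∉ occ ∧ ∀ u ∈ occ, ¬G.Adj x u) := by
    intro occ w
    constructor
    · rintro ⟨hwb, hwr, hDcond, hScond⟩
      have hblue : ∀ b ∈ Blue0 ∪ (occ ∩ VL).image ι,
          w ≠ b → G'.edist w b ≤ (k:ℕ∞) → False := by
        intro b hb hne hle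
        obtain ⟨m, h1, h2, he⟩ := exdist G' w b k hne hle
        exact hScond b hb m ⟨h1, h2⟩ he
      by_cases hw : ∃ x : V, ι x = w
      · obtain ⟨x, rfl⟩ := hw
        have hxocc : x ∉ occ := by
          intro hx
          rcases hcover x with hxl | hxr
          · exact hwb (Finset.mem_union_right _
              (Finset.mem_image_of_mem ι (Finset.mem_inter.2 ⟨hx, hxl⟩)))
          · exact hwr (Finset.mem_union_right _
              (Finset.mem_image_of_mem ι (Finset.mem_inter.2 ⟨hx, hxr⟩)))
        have hxL : x ∈ VL := by
          by_contra hxl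
          have hxr : x ∈ VR := (hcover x).resolve_left hxl
          obtain ⟨⟨b, hb, hble⟩, -, -⟩ := hbR x hxr
          exact hblue b (Finset.mem_union_left _ hb)
            (by rintro rfl; exact hB0 x hb) hble
        refine ⟨x, rfl, hxL, hxocc, fun u hu hadj => ?_⟩
        have huR : u ∈ VR := by
          rcases hbip hadj with ⟨-, h⟩ | ⟨h, -⟩
          · exact h
          · exact absurd hxL (Finset.disjoint_right.1 hparts h)
        exact hDcond (ι u) (Finset.mem_union_right _
          (Finset.mem_image_of_mem ι (Finset.mem_inter.2 ⟨hu, huR⟩))) n hnD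
          ((hc x u hadj.ne).1 hadj)
      · push_neg at hw
        have hwB : w ∉ Blue0 := fun h => hwb (Finset.mem_union_left _ h)
        have hwR : w ∉ Red0 := fun h => hwr (Finset.mem_union_left _ h)
        obtain ⟨⟨b, hb, hble⟩, -⟩ := ha w hw hwB hwR
        exact absurd (hblue b (Finset.mem_union_left _ hb)
          (by rintro rfl; exact hwB hb) hble) not_false
    · rintro ⟨x, rfl, hxL, hxocc, hnadj⟩
      have hxR : x ∉ VR := Finset.disjoint_left.1 hparts hxL
      obtain ⟨-, hbfar, hrfar⟩ := hbL x hxL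
      refine ⟨?_, ?_, ?_, ?_⟩
      · simp only [Finset.mem_union, Finset.mem_image, not_or, not_exists]
        exact ⟨hB0 x, fun u hu => hxocc (by have h := ι.injective hu.2; subst h; exact (Finset.mem_inter.1 hu.1).1)⟩
      · simp only [Finset.mem_union, Finset.mem_image, not_or, not_exists]
        exact ⟨hR0 x, fun u hu => hxocc (by have h := ι.injective hu.2; subst h; exact (Finset.mem_inter.1 hu.1).1)⟩
      · intro r hr d hd
        have hdn : (d:ℕ∞) < (n:ℕ∞) + 1 := by
          exact_mod_cast Nat.lt_succ_of_le (hD hd).2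
        have hdk : (d:ℕ∞) < (k:ℕ∞) + 1 := by
          have := (hD hd).2
          exact_mod_cast by omega
        rcases Finset.mem_union.1 hr with h | h
        · exact (lt_of_lt_of_le hdn (hrfar r h)).ne'
        · obtain ⟨u, hu, rfl⟩ := Finset.mem_image.1 h
          obtain ⟨huo, huR⟩ := Finset.mem_inter.1 hu
          have hadj : ¬G.Adj x u := hnadj u huo
          have hxu : x ≠ u := fun h => hxR (h ▸ huR)
          exact (lt_of_lt_of_le hdk ((hc x u hxu).2 hadj)).ne'
      · intro b hb s hs
        have hsk : (s:ℕ∞) < (k:ℕ∞) + 1 := by exact_mod_cast Nat.lt_succ_of_le hs.2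
        rcases Finset.mem_union.1 hb with h | h
        · exact (lt_of_lt_of_le hsk (hbfar b h)).ne'
        · obtain ⟨u, hu, rfl⟩ := Finset.mem_image.1 h
          obtain ⟨huo, huL⟩ := Finset.mem_inter.1 hu
          have hadj : ¬G.Adj x u := by
            intro hadj
            rcases hbip hadj with ⟨-, h2⟩ | ⟨h2, -⟩
            · exact Finset.disjoint_left.1 hparts huL h2
            · exact hxR h2
          have hxu : x ≠ u := fun h => hxocc (h ▸ huo)
          exact (lt_of_lt_of_le hsk ((hc x u hxu).2 hadj)).ne'
  -- Characterization of Right moves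
  have hRchar : ∀ (occ : Finset V) (w : W),
      RightMove G' D (Set.Icc 1 k) (Blue0 ∪ (occ ∩ VL).image ι) (Red0 ∪ (occ ∩ VR).image ι) w ↔
      ∃ x : V, ι x = w ∧ (x ∈ VR ∧ x ∉ occ ∧ ∀ u ∈ occ, ¬G.Adj x u) := by
    intro occ w
    constructor
    · rintro ⟨hwb, hwr, hDcond, hScond⟩
      have hred : ∀ r ∈ Red0 ∪ (occ ∩ VR).image ι,
          w ≠ r → G'.edist w r ≤ (k:ℕ∞) → False := by
        intro r hr hne hle
        obtain ⟨m, h1, h2, he⟩ := exdist G' w r k hne hle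
        exact hScond r hr m ⟨h1, h2⟩ he
      by_cases hw : ∃ x : V, ι x = w
      · obtain ⟨x, rfl⟩ := hw
        have hxocc : x ∉ occ := by
          intro hx
          rcases hcover x with hxl | hxr
          · exact hwb (Finset.mem_union_right _
              (Finset.mem_image_of_mem ι (Finset.mem_inter.2 ⟨hx, hxl⟩)))
          · exact hwr (Finset.mem_union_right _
              (Finset.mem_image_of_mem ι (Finset.mem_inter.2 ⟨hx, hxr⟩)))
        have hxRv : x ∈ VR := by
          by_contra hxr
          have hxl : x ∈ VL := (hcover x).resolve_right hxr
          obtain ⟨⟨r, hr, hrle⟩, -, -⟩ := hbL x hxl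
          exact hred r (Finset.mem_union_left _ hr)
            (by rintro rfl; exact hR0 x hr) hrle
        refine ⟨x, rfl, hxRv, hxocc, fun u hu hadj => ?_⟩
        have huL : u ∈ VL := by
          rcases hbip hadj with ⟨h, -⟩ | ⟨-, h⟩
          · exact absurd hxRv (Finset.disjoint_left.1 hparts h)
          · exact h
        exact hDcond (ι u) (Finset.mem_union_right _
          (Finset.mem_image_of_mem ι (Finset.mem_inter.2 ⟨hu, huL⟩))) n hnD
          ((hc x u hadj.ne).1 hadj)
      · push_neg at hw
        have hwB : w ∉ Blue0 := fun h => hwb (Finset.mem_union_left _ h)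
        have hwR : w ∉ Red0 := fun h => hwr (Finset.mem_union_left _ h)
        obtain ⟨-, ⟨r, hr, hrle⟩⟩ := ha w hw hwB hwR
        exact absurd (hred r (Finset.mem_union_left _ hr)
          (by rintro rfl; exact hwR hr) hrle) not_false
    · rintro ⟨x, rfl, hxRv, hxocc, hnadj⟩
      have hxL : x ∉ VL := Finset.disjoint_right.1 hparts hxRv
      obtain ⟨-, hrfar, hbfar⟩ := hbR x hxRv
      refine ⟨?_, ?_, ?_, ?_⟩
      · simp only [Finset.mem_union, Finset.mem_image, not_or, not_exists]
        exact ⟨hB0 x, fun u hu => hxocc (by have h := ι.injective hu.2; subst h; exact (Finset.mem_inter.1 hu.1).1)⟩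
      · simp only [Finset.mem_union, Finset.mem_image, not_or, not_exists]
        exact ⟨hR0 x, fun u hu => hxocc (by have h := ι.injective hu.2; subst h; exact (Finset.mem_inter.1 hu.1).1)⟩
      · intro b hb d hd
        have hdn : (d:ℕ∞) < (n:ℕ∞) + 1 := by
          exact_mod_cast Nat.lt_succ_of_le (hD hd).2
        have hdk : (d:ℕ∞) < (k:ℕ∞) + 1 := by
          have := (hD hd).2
          exact_mod_cast by omega
        rcases Finset.mem_union.1 hb with h | h
        · exact (lt_of_lt_of_le hdn (hbfar b h)).ne'
        · obtain ⟨u, hu, rfl⟩ := Finset.mem_image.1 h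
          obtain ⟨huo, huL⟩ := Finset.mem_inter.1 hu
          have hadj : ¬G.Adj x u := hnadj u huo
          have hxu : x ≠ u := fun h => hxL (h ▸ huL)
          exact (lt_of_lt_of_le hdk ((hc x u hxu).2 hadj)).ne'
      · intro r hr s hs
        have hsk : (s:ℕ∞) < (k:ℕ∞) + 1 := by exact_mod_cast Nat.lt_succ_of_le hs.2
        rcases Finset.mem_union.1 hr with h | h
        · exact (lt_of_lt_of_le hsk (hrfar r h)).ne'
        · obtain ⟨u, hu, rfl⟩ := Finset.mem_image.1 h
          obtain ⟨huo, huR⟩ := Finset.mem_inter.1 hu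
          have hadj : ¬G.Adj x u := by
            intro hadj
            rcases hbip hadj with ⟨h2, -⟩ | ⟨-, h2⟩
            · exact hxL h2
            · exact Finset.disjoint_left.1 hparts h2 huR
          have hxu : x ≠ u := fun h => hxocc (h ▸ huo)
          exact (lt_of_lt_of_le hsk ((hc x u hxu).2 hadj)).ne'
  -- Main induction
  have key : ∀ m (occ : Finset V), occᶜ.card = m →
      Nonempty (distGame G' D (Set.Icc 1 k) (Blue0 ∪ (occ ∩ VL).image ι)
        (Red0 ∪ (occ ∩ VR).image ι) ≡r bnkGame G VL VR occ) := by
    intro m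
    induction m using Nat.strong_induction_on with
    | _ m ih =>
      intro occ hocc
      refine ⟨?_⟩
      rw [distGame, bnkGame]
      refine PGame.Relabelling.mk'
        (Equiv.ofBijective (fun x => ⟨ι x.1, (hLchar occ (ι x.1)).2 ⟨x.1, rfl, x.2⟩⟩)
          ⟨fun a b h => Subtype.ext (ι.injective (congrArg Subtype.val h)), fun w => by
            obtain ⟨x, hx, hp⟩ := (hLchar occ w.1).1 w.2
            exact ⟨⟨x, hp⟩, Subtype.ext hx⟩⟩)
        (Equiv.ofBijective (fun x => ⟨ι x.1, (hRchar occ (ι x.1)).2 ⟨x.1, rfl, x.2⟩⟩)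
          ⟨fun a b h => Subtype.ext (ι.injective (congrArg Subtype.val h)), fun w => by
            obtain ⟨x, hx, hp⟩ := (hRchar occ w.1).1 w.2
            exact ⟨⟨x, hp⟩, Subtype.ext hx⟩⟩)
        (fun i => ?_) (fun j => ?_)
      · have hlt : ((insert i.1 occ)ᶜ).card < m := by
          rw [← hocc, Finset.compl_insert]
          exact Finset.card_erase_lt_of_mem (Finset.mem_compl.2 i.2.2.1)
        have e1 : Blue0 ∪ ((insert i.1 occ ∩ VL).image ι)
            = insert (ι i.1) (Blue0 ∪ (occ ∩ VL).image ι) := by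
          rw [Finset.insert_inter_of_mem i.2.1, Finset.image_insert, Finset.union_insert]
        have e2 : Red0 ∪ ((insert i.1 occ ∩ VR).image ι)
            = Red0 ∪ (occ ∩ VR).image ι := by
          rw [Finset.insert_inter_of_notMem (Finset.disjoint_left.1 hparts i.2.1)]
        have := (ih _ hlt (insert i.1 occ) rfl).some
        rw [e1, e2] at this
        exact this
      · have hlt : ((insert j.1 occ)ᶜ).card < m := by
          rw [← hocc, Finset.compl_insert]
          exact Finset.card_erase_lt_of_mem (Finset.mem_compl.2 j.2.2.1)
        have e1 : Blue0 ∪ ((insert j.1 occ ∩ VL).image ι)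
            = Blue0 ∪ (occ ∩ VL).image ι := by
          rw [Finset.insert_inter_of_notMem (Finset.disjoint_right.1 hparts j.2.1)]
        have e2 : Red0 ∪ ((insert j.1 occ ∩ VR).image ι)
            = insert (ι j.1) (Red0 ∪ (occ ∩ VR).image ι) := by
          rw [Finset.insert_inter_of_mem j.2.1, Finset.image_insert, Finset.union_insert]
        have := (ih _ hlt (insert j.1 occ) rfl).some
        rw [e1, e2] at this
        exact this
  obtain ⟨r⟩ := key (∅ᶜ : Finset V).card ∅ rfl
  rw [show Blue0 ∪ ((∅ ∩ VL : Finset V).image ι) = Blue0 by simp,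
      show Red0 ∪ ((∅ ∩ VR : Finset V).image ι) = Red0 by simp] at r
  have he := PGame.relab_zero_iff r
  exact ⟨⟨r⟩, not_congr he.2.2.1, he.1, not_congr he.1, he.2.2.1⟩
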